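/- Let α(s) = (s, s²/2) and β(s) = (c₀ s² + c₁ s, -(c₁/2) s² + c₂ s) + β₀ for real constants c₀, c₁, c₂ and a constant vector β₀ ∈ ℝ². Then the dual curve γ = α + ε β satisfies det(γ', γ'') = 1 (as a dual number) and has equiaffine curvature κ_γ ≡ 0 (i.e., det(γ'', γ''') = 0 as a dual number). -/

import Mathlib

/-- The standard area form (2×2 determinant) on the real plane. -/
noncomputable def det2 (u v : ℝ × ℝ) : ℝ := u.1 * v.2 - u.2 * v.1

lemma derivProd (f g f' g' : ℝ → ℝ)
    (hf : ∀ s, HasDerivAt f (f' s) s) (hg : ∀ s, HasDerivAt g (g' s) s) :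
    deriv (fun s => (f s, g s)) = fun s => (f' s, g' s) := by
  funext s
  exact ((hf s).prodMk (hg s)).deriv

/-- For `α(s) = (s, s²/2)` and `β(s) = (c₀s² + c₁s, -(c₁/2)s² + c₂s) + β₀`, the dual
curve `γ = α + εβ` satisfies `det(γ',γ'') = 1 + ε·0` and `κ_γ = det(γ'',γ''') = 0 + ε·0`. -/
theorem stmt7 (c₀ c₁ c₂ : ℝ) (β₀ : ℝ × ℝ) (α β : ℝ → ℝ × ℝ)
    (hαdef : ∀ s, α s = (s, s ^ 2 / 2))
    (hβdef : ∀ s, β s = (c₀ * s ^ 2 + c₁ * s, -(c₁ / 2) * s ^ 2 + c₂ * s) + β₀) :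
    ∀ s : ℝ,
      det2 (deriv α s) (deriv (deriv α) s) = 1 ∧
      det2 (deriv α s) (deriv (deriv β) s) + det2 (deriv β s) (deriv (deriv α) s) = 0 ∧
      det2 (deriv (deriv α) s) (deriv (deriv (deriv α)) s) = 0 ∧
      det2 (deriv (deriv α) s) (deriv (deriv (deriv β)) s) +
        det2 (deriv (deriv β) s) (deriv (deriv (deriv α)) s) = 0 := by
  have hα : α = fun s => (s, s ^ 2 / 2) := funext hαdef
  have hβ : β = fun s => (c₀ * s ^ 2 + c₁ * s + β₀.1, -(c₁ / 2) * s ^ 2 + c₂ * s + β₀.2) := by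
    funext s; rw [hβdef s]; rfl
  have hα1 : deriv α = fun s => ((1 : ℝ), s) := by
    rw [hα]
    apply derivProd
    · intro s; simpa using (hasDerivAt_id' s)
    · intro s
      have : HasDerivAt (fun s : ℝ => s ^ 2 / 2) (2 * s ^ 1 / 2) s :=
        (hasDerivAt_pow 2 s).div_const 2
      simpa using this
  have hα2 : deriv (deriv α) = fun _ => ((0 : ℝ), (1 : ℝ)) := by
    rw [hα1]
    apply derivProd
    · intro s; exact hasDerivAt_const s 1
    · intro s; exact hasDerivAt_id s
  have hα3 : deriv (deriv (deriv α)) = fun _ => ((0 : ℝ), (0 : ℝ)) := by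
    rw [hα2]
    apply derivProd <;> intro s <;> exact hasDerivAt_const s _
  have hsq : ∀ s : ℝ, HasDerivAt (fun s : ℝ => s ^ 2) (2 * s) s := by
    intro s; simpa using hasDerivAt_pow 2 s
  have hβ1 : deriv β = fun s => (2 * c₀ * s + c₁, -c₁ * s + c₂) := by
    rw [hβ]
    apply derivProd
    · intro s
      have : HasDerivAt (fun s : ℝ => c₀ * s ^ 2 + c₁ * s + β₀.1)
          (c₀ * (2 * s) + c₁ * 1 + 0) s := by
        have h :=
        (((hsq s).const_mul c₀).add ((hasDerivAt_id s).const_mul c₁)).add_const β₀.1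
        simpa using h
      convert this using 1; ring
    · intro s
      have : HasDerivAt (fun s : ℝ => -(c₁ / 2) * s ^ 2 + c₂ * s + β₀.2)
          (-(c₁ / 2) * (2 * s) + c₂ * 1 + 0) s := by
        have h :=
        (((hsq s).const_mul (-(c₁ / 2))).add ((hasDerivAt_id s).const_mul c₂)).add_const β₀.2
        simpa using h
      convert this using 1; ring
  have hβ2 : deriv (deriv β) = fun _ => (2 * c₀, -c₁) := by
    rw [hβ1]
    apply derivProd
    · intro s
      have : HasDerivAt (fun s : ℝ => 2 * c₀ * s + c₁) (2 * c₀ * 1 + 0) s := by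
        have h :=
        ((hasDerivAt_id s).const_mul (2 * c₀)).add_const c₁
        simpa using h
      simpa using this
    · intro s
      have : HasDerivAt (fun s : ℝ => -c₁ * s + c₂) (-c₁ * 1 + 0) s := by
        have h :=
        ((hasDerivAt_id s).const_mul (-c₁)).add_const c₂
        simpa using h
      simpa using this
  have hβ3 : deriv (deriv (deriv β)) = fun _ => ((0 : ℝ), (0 : ℝ)) := by
    rw [hβ2]
    apply derivProd <;> intro s <;> exact hasDerivAt_const s _
  intro s
  rw [hα3, hα2, hα1, hβ3, hβ2, hβ1]
  simp only [det2]
  refine ⟨by ring, by ring, by ring, by ring⟩
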